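/- arXiv:2111.13160 — 3 statements merged into one kernel-verified Lean document; each statement's English description precedes it below -/
import Mathlib

section
/- Let O ∈ L(U;H) and set Q = O O* ∈ L(H). Then the range of the non-negative square root Q^{1/2} equals the range of O, and for every h in the range of O, ‖Q^{-1/2} h‖_H = ‖O^{-1} h‖_U, where Q^{-1/2} and O^{-1} denote the pseudo-inverses (minimal-norm preimages). -/
open scoped RealInnerProductSpace

/-- If `‖A e‖ = ‖B e‖` for all `e` and `C ∘ A = D ∘ B`, then for every `p` in the closure of
the range of `A` there is `q` with `D q = C p` and `‖q‖ = ‖p‖`. -/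
private lemma aux_transfer {E F G W : Type*}
    [NormedAddCommGroup E] [NormedSpace ℝ E]
    [NormedAddCommGroup F] [NormedSpace ℝ F]
    [NormedAddCommGroup G] [NormedSpace ℝ G] [CompleteSpace G]
    [NormedAddCommGroup W] [NormedSpace ℝ W]
    (A : E →L[ℝ] F) (B : E →L[ℝ] G) (C : F →L[ℝ] W) (D : G →L[ℝ] W)
    (h1 : ∀ e, ‖A e‖ = ‖B e‖) (h2 : C ∘L A = D ∘L B)
    {p : F} (hp : p ∈ closure (Set.range A)) :
    ∃ q : G, D q = C p ∧ ‖q‖ = ‖p‖ := by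
  obtain ⟨u, hu_mem, hu_lim⟩ := mem_closure_iff_seq_limit.mp hp
  choose e he using hu_mem
  have hAe : Filter.Tendsto (fun n => A (e n)) Filter.atTop (nhds p) := by
    simpa only [he] using hu_lim
  have hAc : CauchySeq (fun n => A (e n)) := hAe.cauchySeq
  have hBc : CauchySeq (fun n => B (e n)) := by
    rw [Metric.cauchySeq_iff] at hAc ⊢
    intro ε hε
    obtain ⟨N, hN⟩ := hAc ε hε
    refine ⟨N, fun m hm n hn => ?_⟩
    have h := hN m hm n hn
    rw [dist_eq_norm, ← map_sub] at h ⊢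
    rw [← h1]
    exact h
  obtain ⟨q, hq⟩ := cauchySeq_tendsto_of_complete hBc
  have heq : ∀ n, D (B (e n)) = C (A (e n)) := by
    intro n
    have := DFunLike.congr_fun h2 (e n)
    simpa using this.symm
  refine ⟨q, ?_, ?_⟩
  · have hD : Filter.Tendsto (fun n => C (A (e n))) Filter.atTop (nhds (D q)) := by
      have := (D.continuous.tendsto q).comp hq
      simpa only [Function.comp_def, heq] using this
    exact tendsto_nhds_unique hD ((C.continuous.tendsto p).comp hAe)
  · have h1' : Filter.Tendsto (fun n => ‖B (e n)‖) Filter.atTop (nhds ‖q‖) :=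
      (continuous_norm.tendsto q).comp hq
    have h2' : Filter.Tendsto (fun n => ‖B (e n)‖) Filter.atTop (nhds ‖p‖) := by
      have := (continuous_norm.tendsto p).comp hAe
      simpa only [Function.comp_def, h1] using this
    exact tendsto_nhds_unique h1' h2'

/-- For O ∈ L(U;H) and Q = O O*, the range of the non-negative square root Q^{1/2}
equals the range of O, and the minimal norm of a Q^{1/2}-preimage of any h in the
range equals the minimal norm of an O-preimage (equality of pseudo-inverse norms). -/
theorem range_sqrt_eq_range_and_pseudoInverse_norm
    {U : Type*} [NormedAddCommGroup U] [InnerProductSpace ℝ U]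
    [CompleteSpace U] [TopologicalSpace.SeparableSpace U]
    {H : Type*} [NormedAddCommGroup H] [InnerProductSpace ℝ H]
    [CompleteSpace H] [TopologicalSpace.SeparableSpace H]
    (O : U →L[ℝ] H) (S : H →L[ℝ] H)
    (hS_symm : ∀ x y : H, ⟪S x, y⟫ = ⟪x, S y⟫)
    (hS_pos : ∀ x : H, 0 ≤ ⟪S x, x⟫)
    (hS_sq : S ∘L S = O ∘L (ContinuousLinearMap.adjoint O)) :
    Set.range S = Set.range O ∧
      ∀ h ∈ Set.range O,
        sInf {r : ℝ | ∃ x : H, S x = h ∧ ‖x‖ = r}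
          = sInf {r : ℝ | ∃ y : U, O y = h ∧ ‖y‖ = r} := by
  classical
  set Oa : H →L[ℝ] U := ContinuousLinearMap.adjoint O with hOa
  have hsq : ∀ x : H, S (S x) = O (Oa x) := by
    intro x
    have := DFunLike.congr_fun hS_sq x
    simpa using this
  -- the key norm identity ‖S x‖ = ‖O* x‖
  have hnorm : ∀ x : H, ‖S x‖ = ‖Oa x‖ := by
    intro x
    have h1 : ‖S x‖ ^ 2 = ‖Oa x‖ ^ 2 := by
      rw [← real_inner_self_eq_norm_sq, ← real_inner_self_eq_norm_sq]
      calc ⟪S x, S x⟫ = ⟪x, S (S x)⟫ := hS_symm x (S x)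
        _ = ⟪x, O (Oa x)⟫ := by rw [hsq]
        _ = ⟪Oa x, Oa x⟫ := (ContinuousLinearMap.adjoint_inner_left O (Oa x) x).symm
    rw [← Real.sqrt_sq (norm_nonneg (S x)), ← Real.sqrt_sq (norm_nonneg (Oa x)), h1]
  -- orthogonality facts
  have hSperp : ∀ x : H, (∀ z ∈ Set.range S, ⟪z, x⟫ = 0) → S x = 0 := by
    intro x hx
    have h0 : ⟪S x, S x⟫ = 0 := by
      rw [hS_symm]
      have := hx (S (S x)) ⟨S x, rfl⟩
      rwa [real_inner_comm] at this
    exact inner_self_eq_zero.mp h0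
  have hOperp : ∀ y : U, (∀ z ∈ Set.range Oa, ⟪z, y⟫ = 0) → O y = 0 := by
    intro y hy
    have h0 : ⟪O y, O y⟫ = 0 := by
      have := hy (Oa (O y)) ⟨O y, rfl⟩
      rwa [ContinuousLinearMap.adjoint_inner_left O y (O y)] at this
    exact inner_self_eq_zero.mp h0
  -- closed subspaces
  set K : Submodule ℝ H := (LinearMap.range (S : H →ₗ[ℝ] H)).topologicalClosure with hK
  set K' : Submodule ℝ U := (LinearMap.range (Oa : H →ₗ[ℝ] U)).topologicalClosure with hK'
  haveI : CompleteSpace K := (LinearMap.range (S : H →ₗ[ℝ] H)).isClosed_topologicalClosure.completeSpace_coe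
  haveI : CompleteSpace K' := (LinearMap.range (Oa : H →ₗ[ℝ] U)).isClosed_topologicalClosure.completeSpace_coe
  -- step S → O : for every x there is y with O y = S x and ‖y‖ ≤ ‖x‖
  have stepSO : ∀ x : H, ∃ y : U, O y = S x ∧ ‖y‖ ≤ ‖x‖ := by
    intro x
    set p : H := (Submodule.orthogonalProjectionOnto K x : H) with hp
    have hmemp : p ∈ closure (Set.range S) := by
      have hpK : p ∈ K := (Submodule.orthogonalProjectionOnto K x).2
      rw [hK] at hpK
      rw [← ContinuousLinearMap.coe_coe S, ← LinearMap.coe_range (S : H →ₗ[ℝ] H)]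
      rw [← Submodule.topologicalClosure_coe]
      exact hpK
    have hxp : x - p ∈ Kᗮ := Submodule.sub_starProjection_mem_orthogonal x
    have hSp : S p = S x := by
      have h0 : S (x - p) = 0 := by
        apply hSperp
        rintro z ⟨w, rfl⟩
        have hzK : S w ∈ K := (LinearMap.range (S : H →ₗ[ℝ] H)).le_topologicalClosure ⟨w, rfl⟩
        exact (Submodule.mem_orthogonal K (x - p)).mp hxp (S w) hzK
      have h1 : S x - S p = 0 := by rw [← map_sub]; exact h0
      exact (sub_eq_zero.mp h1).symm
    have hnp : ‖p‖ ≤ ‖x‖ := by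
      have h1 := (Submodule.orthogonalProjectionOnto K).le_opNorm x
      have h2 := Submodule.orthogonalProjectionOnto_norm_le K
      calc ‖p‖ = ‖Submodule.orthogonalProjectionOnto K x‖ := rfl
        _ ≤ ‖Submodule.orthogonalProjectionOnto K‖ * ‖x‖ := h1
        _ ≤ 1 * ‖x‖ := by
            apply mul_le_mul_of_nonneg_right h2 (norm_nonneg x)
        _ = ‖x‖ := one_mul _
    obtain ⟨y, hy1, hy2⟩ := aux_transfer S Oa S O hnorm hS_sq hmemp
    exact ⟨y, by rw [hy1, hSp], hy2.le.trans hnp⟩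
  -- step O → S : for every y there is x with S x = O y and ‖x‖ ≤ ‖y‖
  have stepOS : ∀ y : U, ∃ x : H, S x = O y ∧ ‖x‖ ≤ ‖y‖ := by
    intro y
    set p : U := (Submodule.orthogonalProjectionOnto K' y : U) with hp
    have hmemp : p ∈ closure (Set.range Oa) := by
      have hpK : p ∈ K' := (Submodule.orthogonalProjectionOnto K' y).2
      rw [← ContinuousLinearMap.coe_coe Oa, ← LinearMap.coe_range (Oa : H →ₗ[ℝ] U), ← Submodule.topologicalClosure_coe]
      exact hpK
    have hyp : y - p ∈ K'ᗮ := Submodule.sub_starProjection_mem_orthogonal y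
    have hOp : O p = O y := by
      have h0 : O (y - p) = 0 := by
        apply hOperp
        rintro z ⟨w, rfl⟩
        have hzK : Oa w ∈ K' := (LinearMap.range (Oa : H →ₗ[ℝ] U)).le_topologicalClosure ⟨w, rfl⟩
        exact (Submodule.mem_orthogonal K' (y - p)).mp hyp (Oa w) hzK
      have h1 : O y - O p = 0 := by rw [← map_sub]; exact h0
      exact (sub_eq_zero.mp h1).symm
    have hnp : ‖p‖ ≤ ‖y‖ := by
      have h1 := (Submodule.orthogonalProjectionOnto K').le_opNorm y
      have h2 := Submodule.orthogonalProjectionOnto_norm_le K'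
      calc ‖p‖ = ‖Submodule.orthogonalProjectionOnto K' y‖ := rfl
        _ ≤ ‖Submodule.orthogonalProjectionOnto K'‖ * ‖y‖ := h1
        _ ≤ 1 * ‖y‖ := by
            apply mul_le_mul_of_nonneg_right h2 (norm_nonneg y)
        _ = ‖y‖ := one_mul _
    obtain ⟨x, hx1, hx2⟩ := aux_transfer Oa S O S (fun e => (hnorm e).symm) hS_sq.symm hmemp
    exact ⟨x, by rw [hx1, hOp], hx2.le.trans hnp⟩
  -- range equality
  have hrange : Set.range S = Set.range O := by
    ext h
    constructor
    · rintro ⟨x, rfl⟩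
      obtain ⟨y, hy, _⟩ := stepSO x
      exact ⟨y, hy⟩
    · rintro ⟨y, rfl⟩
      obtain ⟨x, hx, _⟩ := stepOS y
      exact ⟨x, hx⟩
  refine ⟨hrange, ?_⟩
  intro h hh
  obtain ⟨y0, hy0⟩ := hh
  obtain ⟨x0, hx0, _⟩ := stepOS y0
  have hAne : Set.Nonempty {r : ℝ | ∃ x : H, S x = h ∧ ‖x‖ = r} :=
    ⟨‖x0‖, x0, by rw [hx0, hy0], rfl⟩
  have hBne : Set.Nonempty {r : ℝ | ∃ y : U, O y = h ∧ ‖y‖ = r} :=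
    ⟨‖y0‖, y0, hy0, rfl⟩
  have hAbd : BddBelow {r : ℝ | ∃ x : H, S x = h ∧ ‖x‖ = r} :=
    ⟨0, by rintro r ⟨x, -, rfl⟩; exact norm_nonneg x⟩
  have hBbd : BddBelow {r : ℝ | ∃ y : U, O y = h ∧ ‖y‖ = r} :=
    ⟨0, by rintro r ⟨y, -, rfl⟩; exact norm_nonneg y⟩
  apply le_antisymm
  · apply le_csInf hBne
    rintro b ⟨y, hy, rfl⟩
    obtain ⟨x, hx1, hx2⟩ := stepOS y
    exact le_trans (csInf_le hAbd ⟨x, by rw [hx1, hy], rfl⟩) hx2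
  · apply le_csInf hAne
    rintro a ⟨x, hx, rfl⟩
    obtain ⟨y, hy1, hy2⟩ := stepSO x
    exact le_trans (csInf_le hBbd ⟨y, by rw [hy1, hx], rfl⟩) hy2
end

section
/- Let U be a separable Hilbert space and μ a Borel probability measure on U that is invariant under rotation by π/4, i.e., the pushforward of μ⊗μ under (h,g) ↦ ((h−g)/√2, (h+g)/√2) equals μ⊗μ. Then there exists α > 0 such that ∫_U exp(α ‖h‖²) dμ(h) < ∞. -/
open MeasureTheory
open scoped ENNReal

private lemma fernique_key {U : Type*} [NormedAddCommGroup U] [InnerProductSpace ℝ U]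
    [TopologicalSpace.SeparableSpace U] [MeasurableSpace U] [BorelSpace U]
    (μ : Measure U) [IsProbabilityMeasure μ]
    (hrot : Measure.map
        (fun p : U × U =>
          ((Real.sqrt 2)⁻¹ • (p.1 - p.2), (Real.sqrt 2)⁻¹ • (p.1 + p.2)))
        (μ.prod μ) = μ.prod μ) (s t : ℝ) :
    μ {h | ‖h‖ ≤ s} * μ {h | t < ‖h‖}
      ≤ μ {h | (t - s)/Real.sqrt 2 < ‖h‖} * μ {h | (t - s)/Real.sqrt 2 < ‖h‖} := by
  haveI : SecondCountableTopology U := UniformSpace.secondCountable_of_separable U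
  set r := Real.sqrt 2 with hrdef
  have hrpos : 0 < r := Real.sqrt_pos.mpr (by norm_num)
  have hr2 : r ^ 2 = 2 := Real.sq_sqrt (by norm_num)
  set A : Set U := {h | ‖h‖ ≤ s} with hA
  set B : Set U := {h | t < ‖h‖} with hB
  set B' : Set U := {h | (t - s)/r < ‖h‖} with hB'
  have MA : MeasurableSet A := measurableSet_le measurable_norm measurable_const
  have MB : MeasurableSet B := measurableSet_lt measurable_const measurable_norm
  have hT : Measurable (fun p : U × U =>
      ((Real.sqrt 2)⁻¹ • (p.1 - p.2), (Real.sqrt 2)⁻¹ • (p.1 + p.2))) :=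
    Measurable.prodMk ((measurable_fst.sub measurable_snd).const_smul _)
      ((measurable_fst.add measurable_snd).const_smul _)
  have hsub : (fun p : U × U =>
      ((Real.sqrt 2)⁻¹ • (p.1 - p.2), (Real.sqrt 2)⁻¹ • (p.1 + p.2))) ⁻¹' (A ×ˢ B)
      ⊆ B' ×ˢ B' := by
    rintro ⟨x, y⟩ ⟨h1, h2⟩
    simp only [hA, hB, Set.mem_setOf_eq] at h1 h2
    rw [norm_smul, Real.norm_eq_abs, abs_of_pos (inv_pos.mpr hrpos)] at h1 h2
    have e1 : ‖x - y‖ ≤ s * r := by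
      rw [inv_mul_eq_div, div_le_iff₀ hrpos] at h1; linarith
    have e2 : t * r < ‖x + y‖ := by
      rw [inv_mul_eq_div, lt_div_iff₀ hrpos] at h2; linarith
    have f1 : ‖x + y‖ ≤ ‖x + x‖ + ‖x - y‖ := by
      calc ‖x + y‖ = ‖(x + x) - (x - y)‖ := by congr 1; abel
      _ ≤ ‖x + x‖ + ‖x - y‖ := norm_sub_le _ _
    have f2 : ‖x + y‖ ≤ ‖y + y‖ + ‖x - y‖ := by
      calc ‖x + y‖ = ‖(y + y) + (x - y)‖ := by congr 1; abel
      _ ≤ ‖y + y‖ + ‖x - y‖ := norm_add_le _ _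
    have g1 : ‖x + x‖ ≤ 2 * ‖x‖ := by
      calc ‖x + x‖ ≤ ‖x‖ + ‖x‖ := norm_add_le _ _
      _ = 2 * ‖x‖ := by ring
    have g2 : ‖y + y‖ ≤ 2 * ‖y‖ := by
      calc ‖y + y‖ ≤ ‖y‖ + ‖y‖ := norm_add_le _ _
      _ = 2 * ‖y‖ := by ring
    have hx2 : (t - s) * r < 2 * ‖x‖ := by linarith
    have hy2 : (t - s) * r < 2 * ‖y‖ := by linarith
    constructor <;> simp only [hB', Set.mem_setOf_eq] <;> rw [div_lt_iff₀ hrpos]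
    · nlinarith [hr2, norm_nonneg x, sq_nonneg (t - s - ‖x‖ * r)]
    · nlinarith [hr2, norm_nonneg y, sq_nonneg (t - s - ‖y‖ * r)]
  calc μ A * μ B = (μ.prod μ) (A ×ˢ B) := (Measure.prod_prod _ _).symm
  _ = Measure.map (fun p : U × U =>
          ((Real.sqrt 2)⁻¹ • (p.1 - p.2), (Real.sqrt 2)⁻¹ • (p.1 + p.2))) (μ.prod μ) (A ×ˢ B) := by
        rw [hrot]
  _ = (μ.prod μ) ((fun p : U × U =>
          ((Real.sqrt 2)⁻¹ • (p.1 - p.2), (Real.sqrt 2)⁻¹ • (p.1 + p.2))) ⁻¹' (A ×ˢ B)) :=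
    Measure.map_apply hT (MA.prod MB)
  _ ≤ (μ.prod μ) (B' ×ˢ B') := measure_mono hsub
  _ = μ B' * μ B' := Measure.prod_prod _ _

/-- Fernique's theorem: a Borel probability measure on a separable Hilbert space
that is invariant under rotation by π/4 has a square-exponential moment. -/
theorem fernique_of_rotation_invariant
    {U : Type*} [NormedAddCommGroup U] [InnerProductSpace ℝ U]
    [CompleteSpace U] [TopologicalSpace.SeparableSpace U]
    [MeasurableSpace U] [BorelSpace U]
    (μ : Measure U) [IsProbabilityMeasure μ]
    (hrot : Measure.map
        (fun p : U × U =>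
          ((Real.sqrt 2)⁻¹ • (p.1 - p.2), (Real.sqrt 2)⁻¹ • (p.1 + p.2)))
        (μ.prod μ) = μ.prod μ) :
    ∃ α : ℝ, 0 < α ∧
      ∫⁻ h, ENNReal.ofReal (Real.exp (α * ‖h‖ ^ 2)) ∂μ < ⊤ := by
  haveI : SecondCountableTopology U := UniformSpace.secondCountable_of_separable U
  set r := Real.sqrt 2 with hrdef
  have hrpos : 0 < r := Real.sqrt_pos.mpr (by norm_num)
  have hr2 : r ^ 2 = 2 := Real.sq_sqrt (by norm_num)
  have hrgt1 : 1 < r := by nlinarith [hr2, hrpos]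
  -- choose s with mass at least 3/4 in the ball of radius s
  obtain ⟨s, hs1, hc⟩ : ∃ s : ℝ, 1 ≤ s ∧ (3/4 : ℝ≥0∞) ≤ μ {h : U | ‖h‖ ≤ s} := by
    have hmono : Monotone (fun n : ℕ => {h : U | ‖h‖ ≤ (n : ℝ)}) := by
      intro a b hab h hh
      simp only [Set.mem_setOf_eq] at *
      exact hh.trans (by exact_mod_cast hab)
    have hunion : ⋃ n : ℕ, {h : U | ‖h‖ ≤ (n : ℝ)} = Set.univ := by
      ext h
      simp only [Set.mem_iUnion, Set.mem_setOf_eq, Set.mem_univ, iff_true]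
      exact exists_nat_ge ‖h‖
    have htend := tendsto_measure_iUnion_atTop (μ := μ) hmono
    rw [hunion, measure_univ] at htend
    have hev := htend.eventually (lt_mem_nhds (show (3/4 : ℝ≥0∞) < 1 by
      rw [ENNReal.div_lt_iff (by norm_num) (by norm_num)]; norm_num))
    obtain ⟨n, hn⟩ := hev.exists
    refine ⟨max n 1, le_max_right _ _, le_trans hn.le (measure_mono ?_)⟩
    intro h hh
    simp only [Set.mem_setOf_eq] at *
    exact hh.trans (le_max_left _ _)
  have hs0 : 0 < s := lt_of_lt_of_le one_pos hs1
  -- the sequence of radii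
  set t : ℕ → ℝ := fun n => (2 + r) * s * r ^ n - (r + 1) * s with htdef
  have ht0 : t 0 = s := by simp only [htdef, pow_zero]; ring
  have htrec : ∀ n, t (n + 1) = r * t n + s := by
    intro n
    simp only [htdef, pow_succ]
    linear_combination s * hr2
  have hts : ∀ n, s ≤ t n := by
    intro n
    induction n with
    | zero => rw [ht0]
    | succ n ih => rw [htrec]; nlinarith
  have htpos : ∀ n, 0 < t n := fun n => lt_of_lt_of_le hs0 (hts n)
  have htbound : ∀ n, t n ≤ (2 + r) * s * r ^ n := by
    intro n; simp only [htdef]; nlinarith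
  -- tail measures
  set a : ℕ → ℝ≥0∞ := fun n => μ {h : U | t n < ‖h‖} with hadef
  have hkey : ∀ n, μ {h : U | ‖h‖ ≤ s} * a (n + 1) ≤ a n * a n := by
    intro n
    have hk := fernique_key μ hrot s (t (n + 1))
    have hset : (t (n + 1) - s) / r = t n := by
      rw [htrec n]; field_simp; ring
    rw [hset] at hk
    exact hk
  set m : ℕ → ℝ := fun n => (a n).toReal with hmdef
  have ham : ∀ n, a n = ENNReal.ofReal (m n) :=
    fun n => (ENNReal.ofReal_toReal (measure_ne_top μ _)).symm
  have hm0 : ∀ n, 0 ≤ m n := fun n => ENNReal.toReal_nonneg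
  have hcr : (3/4 : ℝ) ≤ (μ {h : U | ‖h‖ ≤ s}).toReal := by
    have := ENNReal.toReal_mono (measure_ne_top μ _) hc
    norm_num at this
    linarith
  have hkeyr : ∀ n, (3/4 : ℝ) * m (n + 1) ≤ m n * m n := by
    intro n
    have h1 := ENNReal.toReal_mono
      (ENNReal.mul_ne_top (measure_ne_top μ _) (measure_ne_top μ _)) (hkey n)
    rw [ENNReal.toReal_mul, ENNReal.toReal_mul] at h1
    nlinarith [hcr, hm0 (n + 1), ENNReal.toReal_nonneg (a := μ {h : U | ‖h‖ ≤ s})]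
  have hbase : m 0 ≤ 1/4 := by
    have MA : MeasurableSet {h : U | ‖h‖ ≤ s} := measurableSet_le measurable_norm measurable_const
    have hcompl : {h : U | t 0 < ‖h‖} = {h : U | ‖h‖ ≤ s}ᶜ := by
      ext h; simp [ht0, not_le]
    have hsum := measure_add_measure_compl MA (μ := μ)
    have hsum' : (μ {h : U | ‖h‖ ≤ s}).toReal + m 0 = 1 := by
      rw [hmdef]
      simp only [hadef, hcompl]
      rw [← ENNReal.toReal_add (measure_ne_top μ _) (measure_ne_top μ _), hsum]
      simp
    linarith
  have hmb : ∀ n, m n ≤ (3/4 : ℝ) * (1/3) ^ (2 ^ n) := by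
    intro n
    induction n with
    | zero => norm_num; linarith
    | succ n ih =>
      have hk := hkeyr n
      have hq : (0:ℝ) ≤ (1/3 : ℝ) ^ (2 ^ n) := by positivity
      rw [pow_succ 2 n, pow_mul]
      nlinarith [hm0 n, hm0 (n + 1), mul_le_mul ih ih (hm0 n) (by positivity)]
  have hmb' : ∀ n, m n ≤ (1/3 : ℝ) ^ (2 ^ n) := by
    intro n
    have hq : (0:ℝ) ≤ (1/3 : ℝ) ^ (2 ^ n) := by positivity
    nlinarith [hmb n]
  -- choice of α
  set M : ℝ := (2 + r) * s with hMdef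
  have hM1 : 1 ≤ M := by nlinarith
  set α : ℝ := Real.log 2 / (2 * M ^ 2) with hαdef
  have hα : 0 < α := by
    apply div_pos (Real.log_pos one_lt_two)
    positivity
  refine ⟨α, hα, ?_⟩
  have htsq : ∀ n, (t n) ^ 2 ≤ M ^ 2 * 2 ^ n := by
    intro n
    have h1 : t n ≤ M * r ^ n := htbound n
    have h2 : 0 < t n := htpos n
    calc (t n) ^ 2 ≤ (M * r ^ n) ^ 2 := by nlinarith [pow_pos hrpos n]
    _ = M ^ 2 * (r ^ 2) ^ n := by ring
    _ = M ^ 2 * 2 ^ n := by rw [hr2]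
  have hexp : ∀ n, Real.exp (α * (t (n + 1)) ^ 2) ≤ 2 ^ (2 ^ n) := by
    intro n
    have h1 : α * (t (n + 1)) ^ 2 ≤ Real.log 2 * 2 ^ n := by
      have h2 := htsq (n + 1)
      have h3 : α * (t (n + 1)) ^ 2 ≤ α * (M ^ 2 * 2 ^ (n + 1)) :=
        mul_le_mul_of_nonneg_left h2 hα.le
      have h4 : α * (M ^ 2 * 2 ^ (n + 1)) = Real.log 2 * 2 ^ n := by
        rw [hαdef]
        have hM0 : (M : ℝ) ≠ 0 := by positivity
        field_simp
        ring
      linarith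
    calc Real.exp (α * (t (n + 1)) ^ 2) ≤ Real.exp (Real.log 2 * 2 ^ n) :=
      Real.exp_le_exp.mpr h1
    _ = 2 ^ (2 ^ n) := by
      rw [show Real.log 2 * (2:ℝ) ^ n = ((2 ^ n : ℕ) : ℝ) * Real.log 2 by push_cast; ring,
        Real.exp_nat_mul, Real.exp_log two_pos]
  -- the annuli
  set S : ℕ → Set U := fun n =>
    Nat.casesOn n {h : U | ‖h‖ ≤ t 0} (fun k => {h : U | t k < ‖h‖ ∧ ‖h‖ ≤ t (k + 1)}) with hSdef
  have hSmeas : ∀ n, MeasurableSet (S n) := by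
    intro n
    cases n with
    | zero => exact measurableSet_le measurable_norm measurable_const
    | succ k =>
      exact (measurableSet_lt measurable_const measurable_norm).inter
        (measurableSet_le measurable_norm measurable_const)
  set C : ℕ → ℝ≥0∞ := fun n => ENNReal.ofReal (Real.exp (α * (t n) ^ 2)) with hCdef
  have hfg : ∀ h : U, ENNReal.ofReal (Real.exp (α * ‖h‖ ^ 2))
      ≤ ∑' n, Set.indicator (S n) (fun _ => C n) h := by
    intro h
    have hex : ∃ n, ‖h‖ ≤ t n := by
      obtain ⟨n, hn⟩ := pow_unbounded_of_one_lt (‖h‖ + (r + 1) * s) hrgt1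
      refine ⟨n, ?_⟩
      simp only [htdef]
      nlinarith [pow_pos hrpos n, norm_nonneg h]
    set n := Nat.find hex with hndef
    have hn : ‖h‖ ≤ t n := Nat.find_spec hex
    have hmem : h ∈ S n := by
      cases hn' : n with
      | zero => simpa [hSdef] using (hn' ▸ hn)
      | succ k =>
        have hk : ¬ ‖h‖ ≤ t k := Nat.find_min hex (by omega)
        constructor
        · exact lt_of_not_ge hk
        · exact hn' ▸ hn
    calc ENNReal.ofReal (Real.exp (α * ‖h‖ ^ 2)) ≤ C n := by
          apply ENNReal.ofReal_le_ofReal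
          apply Real.exp_le_exp.mpr
          apply mul_le_mul_of_nonneg_left _ hα.le
          nlinarith [norm_nonneg h, htpos n]
    _ = Set.indicator (S n) (fun _ => C n) h := by rw [Set.indicator_of_mem hmem]
    _ ≤ ∑' k, Set.indicator (S k) (fun _ => C k) h := ENNReal.le_tsum n
  calc ∫⁻ h, ENNReal.ofReal (Real.exp (α * ‖h‖ ^ 2)) ∂μ
      ≤ ∫⁻ h, ∑' n, Set.indicator (S n) (fun _ => C n) h ∂μ := lintegral_mono hfg
  _ = ∑' n, C n * μ (S n) := by
      rw [lintegral_tsum (fun n => (measurable_const.indicator (hSmeas n)).aemeasurable)]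
      exact tsum_congr fun n => by rw [lintegral_indicator (hSmeas n), setLIntegral_const]
  _ < ⊤ := by
      rw [tsum_eq_zero_add' ENNReal.summable]
      apply ENNReal.add_lt_top.mpr
      constructor
      · exact lt_of_le_of_lt
          (mul_le_mul_right prob_le_one _)
          (by rw [mul_one]; exact ENNReal.ofReal_lt_top)
      · have hterm : ∀ n : ℕ, C (n + 1) * μ (S (n + 1)) ≤ (ENNReal.ofReal (2/3)) ^ (n + 1) := by
          intro n
          have hC : C (n + 1) ≤ ENNReal.ofReal ((2:ℝ) ^ (2 ^ n)) :=
            ENNReal.ofReal_le_ofReal (hexp n)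
          have hμS : μ (S (n + 1)) ≤ ENNReal.ofReal ((1/3 : ℝ) ^ (2 ^ n)) := by
            have hsub : S (n + 1) ⊆ {h : U | t n < ‖h‖} := fun h hh => hh.1
            calc μ (S (n + 1)) ≤ a n := measure_mono hsub
            _ = ENNReal.ofReal (m n) := ham n
            _ ≤ ENNReal.ofReal ((1/3 : ℝ) ^ (2 ^ n)) := ENNReal.ofReal_le_ofReal (hmb' n)
          calc C (n + 1) * μ (S (n + 1))
              ≤ ENNReal.ofReal ((2:ℝ) ^ (2 ^ n)) * ENNReal.ofReal ((1/3 : ℝ) ^ (2 ^ n)) :=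
            mul_le_mul' hC hμS
          _ = ENNReal.ofReal ((2/3 : ℝ) ^ (2 ^ n)) := by
            rw [← ENNReal.ofReal_mul (by positivity), ← mul_pow]
            norm_num
          _ ≤ ENNReal.ofReal ((2/3 : ℝ) ^ (n + 1)) :=
            ENNReal.ofReal_le_ofReal
              (pow_le_pow_of_le_one (by norm_num) (by norm_num) (Nat.lt_two_pow_self))
          _ = (ENNReal.ofReal (2/3)) ^ (n + 1) := ENNReal.ofReal_pow (by norm_num) _
        calc ∑' n : ℕ, C (n + 1) * μ (S (n + 1))
            ≤ ∑' n : ℕ, (ENNReal.ofReal (2/3)) ^ (n + 1) := ENNReal.tsum_le_tsum hterm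
        _ ≤ ∑' n : ℕ, (ENNReal.ofReal (2/3)) ^ n :=
          ENNReal.tsum_le_tsum fun n =>
            pow_le_pow_of_le_one (zero_le) (by simp [ENNReal.ofReal_le_one]; norm_num) (by omega)
        _ = (1 - ENNReal.ofReal (2/3))⁻¹ := ENNReal.tsum_geometric _
        _ < ⊤ := ENNReal.inv_lt_top.mpr
            (tsub_pos_of_lt (ENNReal.ofReal_lt_one.mpr (by norm_num)))
end

section
/- Let μ be a centred Gaussian measure on a separable Hilbert space H with M := ∫ ‖h‖ dμ(h). For each n ≥ 1 there exist constants C, α > 0 (independent of μ) such that ∫_H ‖h‖^{2n} dμ(h) ≤ n! C α^{-n} M^{2n}. In particular, for every p > 1 there is C_p with (∫‖h‖^p dμ)^{1/p} ≤ C_p (∫‖h‖² dμ)^{1/2}: all moments of a Gaussian are controlled by the second moment. -/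
open MeasureTheory ProbabilityTheory

open Real
open scoped NNReal ENNReal

lemma ofReal_norm_eq_coe_nnnorm {E : Type*} [SeminormedAddCommGroup E] (a : E) :
    ENNReal.ofReal ‖a‖ = (‖a‖₊ : ℝ≥0∞) := by
  rw [← coe_nnnorm, ENNReal.ofReal_coe_nnreal]

noncomputable def gmom (n : ℕ) : ℝ≥0∞ :=
  ∫⁻ x : ℝ, (‖x‖₊ : ℝ≥0∞) ^ (2 * n) ∂(gaussianReal 0 1)

lemma expsq_lintegral :
    ∫⁻ x : ℝ, ENNReal.ofReal (rexp (x ^ 2 / 4)) ∂(gaussianReal 0 1) ≤ 2 := by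
  rw [gaussianReal_of_var_ne_zero 0 one_ne_zero,
    lintegral_withDensity_eq_lintegral_mul _ (measurable_gaussianPDF 0 1)
      (by fun_prop)]
  have hpt : ∀ x : ℝ, (gaussianPDF 0 1 * fun x => ENNReal.ofReal (rexp (x ^ 2 / 4))) x
      = ENNReal.ofReal ((√(2 * π))⁻¹ * rexp (-(1/4) * x ^ 2)) := by
    intro x
    simp only [Pi.mul_apply, gaussianPDF, gaussianPDFReal, NNReal.coe_one, mul_one, sub_zero]
    rw [← ENNReal.ofReal_mul (by positivity)]
    congr 1
    rw [mul_assoc, ← Real.exp_add]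
    ring_nf
  simp only [hpt]
  rw [← ofReal_integral_eq_lintegral_ofReal
    ((integrable_exp_neg_mul_sq (by norm_num : (0:ℝ) < 1/4)).const_mul _)
    (Filter.Eventually.of_forall fun x => by positivity)]
  rw [MeasureTheory.integral_const_mul, integral_gaussian]
  refine ENNReal.ofReal_le_of_le_toReal ?_
  rw [ENNReal.toReal_ofNat]
  rw [inv_mul_le_iff₀ (by positivity)]
  have h1 : √(π / (1/4)) = √(4 * π) := by norm_num [mul_comm]; ring
  have h2 : √(2 * π) * 2 = √(4 * (2 * π)) := by
    rw [show (4:ℝ) * (2*π) = 2^2 * (2*π) by ring,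
      Real.sqrt_mul (show (0:ℝ) ≤ 2^2 by norm_num) (2*π),
      Real.sqrt_sq (by norm_num : (0:ℝ) ≤ 2)]
    ring
  rw [h1, h2]
  exact Real.sqrt_le_sqrt (by nlinarith [pi_pos])

lemma gmom_le (n : ℕ) : gmom n ≤ 2 * (Nat.factorial n) * 4 ^ n := by
  have hpt : ∀ x : ℝ, (‖x‖₊ : ℝ≥0∞) ^ (2 * n)
      ≤ ENNReal.ofReal ((Nat.factorial n) * 4 ^ n) * ENNReal.ofReal (rexp (x ^ 2 / 4)) := by
    intro x
    rw [← ENNReal.ofReal_mul (by positivity)]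
    have : (‖x‖₊ : ℝ≥0∞) ^ (2 * n) = ENNReal.ofReal (|x| ^ (2 * n)) := by
      rw [ENNReal.ofReal_pow (abs_nonneg x), ← enorm_eq_nnnorm, Real.enorm_eq_ofReal_abs]
    rw [this]
    refine ENNReal.ofReal_le_ofReal ?_
    have key := Real.pow_div_factorial_le_exp (x := x ^ 2 / 4) (by positivity) n
    have : |x| ^ (2 * n) = (x ^ 2) ^ n := by
      rw [pow_mul, sq_abs]
    rw [this]
    have h4 : (x ^ 2) ^ n = (x ^ 2 / 4) ^ n * 4 ^ n := by
      rw [div_pow]; field_simp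
    rw [h4]
    calc (x ^ 2 / 4) ^ n * 4 ^ n ≤ ((Nat.factorial n) * rexp (x ^ 2 / 4)) * 4 ^ n := by
          gcongr
          rw [div_le_iff₀ (show (0:ℝ) < Nat.factorial n by positivity)] at key
          linarith
      _ = ↑(Nat.factorial n) * 4 ^ n * rexp (x ^ 2 / 4) := by ring
  calc gmom n ≤ ∫⁻ x : ℝ, ENNReal.ofReal ((Nat.factorial n) * 4 ^ n)
        * ENNReal.ofReal (rexp (x ^ 2 / 4)) ∂(gaussianReal 0 1) :=
        lintegral_mono hpt
    _ = ENNReal.ofReal ((Nat.factorial n) * 4 ^ n)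
        * ∫⁻ x : ℝ, ENNReal.ofReal (rexp (x ^ 2 / 4)) ∂(gaussianReal 0 1) :=
        lintegral_const_mul _ (by fun_prop)
    _ ≤ ENNReal.ofReal ((Nat.factorial n) * 4 ^ n) * 2 := by
        gcongr
        exact expsq_lintegral
    _ = 2 * (Nat.factorial n) * 4 ^ n := by
        rw [ENNReal.ofReal_mul (by positivity), ENNReal.ofReal_pow (by norm_num),
          ENNReal.ofReal_natCast]
        norm_num
        ring

lemma gmom_one_pos : 0 < gmom 1 := by
  rw [gmom, lintegral_pos_iff_support (by fun_prop)]
  have hzero : (gaussianReal 0 1) {(0:ℝ)} = 0 :=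
    gaussianReal_absolutelyContinuous 0 one_ne_zero (measure_singleton 0)
  have hsupp : Function.support (fun x : ℝ => (‖x‖₊ : ℝ≥0∞) ^ (2 * 1)) = {(0:ℝ)}ᶜ := by
    ext x
    simp [Function.mem_support, pow_eq_zero_iff]
  rw [hsupp]
  have := measure_compl (μ := gaussianReal 0 1) (s := {(0:ℝ)}) (measurableSet_singleton 0)
    (measure_ne_top _ _)
  rw [hzero, measure_univ, tsub_zero] at this
  · simp [this]

lemma gaussianReal_eq_map (v : ℝ≥0) :
    gaussianReal 0 v = (gaussianReal 0 1).map (fun y => (√(v : ℝ)) * y) := by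
  by_cases hv : v = 0
  · subst hv
    simp only [NNReal.coe_zero, Real.sqrt_zero, zero_mul]
    rw [Measure.map_const, measure_univ, one_smul, gaussianReal_zero_var]
  · have := gaussianReal_map_const_mul (μ := 0) (v := 1) (√(v : ℝ))
    simp only [mul_zero, mul_one] at this
    rw [show (fun y : ℝ => (√(v : ℝ)) * y) = ((√(v : ℝ)) * ·) by rfl, this]
    congr 1
    ext
    simp [Real.sq_sqrt (v.coe_nonneg)]

lemma lintegral_pow_gaussianReal (v : ℝ≥0) (n : ℕ) :
    ∫⁻ x : ℝ, (‖x‖₊ : ℝ≥0∞) ^ (2 * n) ∂(gaussianReal 0 v) = (v : ℝ≥0∞) ^ n * gmom n := by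
  rw [gaussianReal_eq_map v,
    lintegral_map (by fun_prop) (by fun_prop)]
  have hpt : ∀ y : ℝ, (‖(√(v : ℝ)) * y‖₊ : ℝ≥0∞) ^ (2 * n)
      = (v : ℝ≥0∞) ^ n * (‖y‖₊ : ℝ≥0∞) ^ (2 * n) := by
    intro y
    rw [nnnorm_mul, ENNReal.coe_mul, mul_pow]
    congr 1
    rw [pow_mul]
    congr 1
    rw [← ENNReal.coe_pow]
    congr 1
    ext
    push_cast
    rw [Real.norm_eq_abs, sq_abs, Real.sq_sqrt (v.coe_nonneg)]
  simp only [hpt]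
  rw [lintegral_const_mul _ (by fun_prop)]
  rfl

open scoped RealInnerProductSpace in
lemma orthonormal_set_countable {E : Type*} [NormedAddCommGroup E] [InnerProductSpace ℝ E]
    [TopologicalSpace.SeparableSpace E] {w : Set E}
    (hw : Orthonormal ℝ ((↑) : w → E)) : w.Countable := by
  have hdist : ∀ x ∈ w, ∀ y ∈ w, x ≠ y → (1:ℝ) ≤ dist x y := by
    intro x hx y hy hxy
    have hx1 : ‖x‖ = 1 := hw.1 ⟨x, hx⟩
    have hy1 : ‖y‖ = 1 := hw.1 ⟨y, hy⟩
    have hne : (⟨x, hx⟩ : w) ≠ ⟨y, hy⟩ := fun h => hxy (congrArg Subtype.val h)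
    have hxy0 : ⟪x, y⟫ = 0 := by simpa using hw.2 hne
    have h2 : dist x y ^ 2 = 2 := by
      rw [dist_eq_norm, norm_sub_sq_real, hx1, hy1, hxy0]; ring
    nlinarith [dist_nonneg (x := x) (y := y)]
  have hpd : w.PairwiseDisjoint (fun x => Metric.ball x (1/2)) := by
    intro x hx y hy hxy
    refine Set.disjoint_left.mpr fun z hzx hzy => ?_
    rw [Metric.mem_ball] at hzx hzy
    have h1 := hdist x hx y hy hxy
    have h2 := dist_triangle x z y
    rw [dist_comm x z] at h2
    linarith
  exact hpd.countable_of_isOpen (fun x _ => Metric.isOpen_ball)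
    (fun x _ => ⟨x, Metric.mem_ball_self (by norm_num)⟩)

lemma iSup_pow_directed {β : Type*} [Nonempty β] (g : β → ℝ≥0∞)
    (hd : Directed (· ≤ ·) g) (n : ℕ) : (⨆ b, g b) ^ n = ⨆ b, g b ^ n := by
  refine le_antisymm ?_ (iSup_le fun b => by gcongr; exact le_iSup g b)
  induction n with
  | zero => simp
  | succ k ih =>
    calc (⨆ b, g b) ^ (k+1) = (⨆ b, g b) ^ k * ⨆ b, g b := pow_succ _ _
      _ ≤ (⨆ b, g b ^ k) * ⨆ b, g b := by gcongr
      _ = ⨆ b, g b ^ k * ⨆ c, g c := by rw [ENNReal.iSup_mul]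
      _ ≤ ⨆ b, g b ^ (k+1) := by
          refine iSup_le fun b => ?_
          rw [ENNReal.mul_iSup]
          refine iSup_le fun c => ?_
          obtain ⟨d, hbd, hcd⟩ := hd b c
          refine le_trans ?_ (le_iSup (fun b => g b ^ (k+1)) d)
          rw [pow_succ]
          gcongr

lemma lintegral_sum_pow_le {α ι : Type*} [MeasurableSpace α] (μ : Measure α)
    (f : ι → α → ℝ≥0∞) (hf : ∀ i, Measurable (f i)) (s : Finset ι) {n : ℕ} (hn : 1 ≤ n) :
    (∫⁻ a, (∑ i ∈ s, f i a) ^ (n:ℝ) ∂μ) ^ (1/(n:ℝ))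
      ≤ ∑ i ∈ s, (∫⁻ a, (f i a) ^ (n:ℝ) ∂μ) ^ (1/(n:ℝ)) := by
  classical
  have hn' : (0:ℝ) < n := by exact_mod_cast hn
  induction s using Finset.induction_on with
  | empty =>
    simp only [Finset.sum_empty]
    rw [ENNReal.zero_rpow_of_pos hn', lintegral_zero,
      ENNReal.zero_rpow_of_pos (by positivity)]
  | @insert a s ha ih =>
    simp only [Finset.sum_insert ha]
    calc (∫⁻ x, (f a x + ∑ i ∈ s, f i x) ^ (n:ℝ) ∂μ) ^ (1/(n:ℝ))
        ≤ (∫⁻ x, (f a x) ^ (n:ℝ) ∂μ) ^ (1/(n:ℝ))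
          + (∫⁻ x, (∑ i ∈ s, f i x) ^ (n:ℝ) ∂μ) ^ (1/(n:ℝ)) :=
        ENNReal.lintegral_Lp_add_le (hf a).aemeasurable
          (Finset.measurable_sum s fun i _ => hf i).aemeasurable (by exact_mod_cast hn)
      _ ≤ _ := add_le_add le_rfl ih

noncomputable def Kc : ℝ≥0∞ := (gmom 1)⁻¹

lemma gmom_one_ne_top : gmom 1 ≠ ⊤ :=
  ne_top_of_le_ne_top (by norm_num) (gmom_le 1)

lemma Kc_ne_zero : Kc ≠ 0 := ENNReal.inv_ne_zero.mpr gmom_one_ne_top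
lemma Kc_ne_top : Kc ≠ ⊤ := ENNReal.inv_ne_top.mpr gmom_one_pos.ne'

open scoped RealInnerProductSpace in
theorem gaussian_lintegral_moment_bounds
    {H : Type*} [NormedAddCommGroup H] [InnerProductSpace ℝ H]
    [CompleteSpace H] [TopologicalSpace.SeparableSpace H]
    [MeasurableSpace H] [BorelSpace H]
    (μ : Measure H) [IsProbabilityMeasure μ]
    (hG : ∀ φ : H →L[ℝ] ℝ, ∃ v : NNReal, Measure.map φ μ = gaussianReal 0 v) :
    (∀ n : ℕ, 1 ≤ n →
      ∫⁻ h, (‖h‖₊ : ℝ≥0∞) ^ (2*n) ∂μ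
        ≤ 2 * (Nat.factorial n) * (256 * Kc^3) ^ n * (∫⁻ h, (‖h‖₊ : ℝ≥0∞) ∂μ) ^ (2*n)) ∧
    (∀ n : ℕ, 1 ≤ n →
      ∫⁻ h, (‖h‖₊ : ℝ≥0∞) ^ (2*n) ∂μ
        ≤ 2 * (Nat.factorial n) * (4 * Kc) ^ n * (∫⁻ h, (‖h‖₊ : ℝ≥0∞)^2 ∂μ) ^ n) := by
  classical
  obtain ⟨w, b, hb⟩ := exists_hilbertBasis ℝ H
  have hwc : w.Countable := orthonormal_set_countable (hb ▸ b.orthonormal)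
  haveI : Countable w := hwc.to_subtype
  set φ : w → H →L[ℝ] ℝ := fun i => innerSL ℝ (b i) with hφ
  set f : w → H → ℝ≥0∞ := fun i h => (‖φ i h‖₊ : ℝ≥0∞) ^ 2 with hf
  have hfm : ∀ i, Measurable (f i) := fun i =>
    ((φ i).continuous.measurable.nnnorm.coe_nnreal_ennreal).pow_const 2
  choose v hv using fun i => hG (φ i)
  -- moments of the marginals
  have hmom : ∀ (i : w) (n : ℕ), ∫⁻ h, (f i h) ^ n ∂μ = (v i : ℝ≥0∞) ^ n * gmom n := by
    intro i n
    have hpt : ∀ h : H, (f i h) ^ n = (‖φ i h‖₊ : ℝ≥0∞) ^ (2 * n) := fun h => by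
      rw [hf]; exact (pow_mul _ 2 n).symm
    simp only [hpt]
    calc ∫⁻ h, (‖φ i h‖₊ : ℝ≥0∞) ^ (2*n) ∂μ
        = ∫⁻ x, (‖x‖₊ : ℝ≥0∞) ^ (2*n) ∂(Measure.map (φ i) μ) :=
          (lintegral_map (measurable_nnnorm.coe_nnreal_ennreal.pow_const _)
            (φ i).continuous.measurable).symm
      _ = (v i : ℝ≥0∞) ^ n * gmom n := by
          rw [hv i]; exact lintegral_pow_gaussianReal (v i) n
  -- Parseval
  have hpar : ∀ h : H, ∑' i, f i h = (‖h‖₊ : ℝ≥0∞) ^ 2 := by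
    intro h
    have hs : HasSum (fun i : w => (φ i h) ^ 2) (‖h‖ ^ 2) := by
      have h0 := b.hasSum_inner_mul_inner h h
      rw [real_inner_self_eq_norm_sq] at h0
      have hfun : (fun i : w => (φ i h) ^ 2) = fun i => ⟪h, b i⟫ * ⟪b i, h⟫ := by
        funext i
        rw [hφ]
        simp only [innerSL_apply_apply]
        rw [sq, real_inner_comm (b i) h]
      rw [hfun]; exact h0
    calc ∑' i, f i h = ∑' i, ENNReal.ofReal ((φ i h) ^ 2) := by
          refine tsum_congr fun i => ?_
          rw [show f i h = (‖φ i h‖₊ : ℝ≥0∞) ^ 2 from rfl, ← enorm_eq_nnnorm, Real.enorm_eq_ofReal_abs,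
            ← ENNReal.ofReal_pow (abs_nonneg _), sq_abs]
      _ = ENNReal.ofReal (∑' i, (φ i h) ^ 2) :=
          (ENNReal.ofReal_tsum_of_nonneg (fun i => sq_nonneg _) hs.summable).symm
      _ = (‖h‖₊ : ℝ≥0∞) ^ 2 := by
          rw [hs.tsum_eq, ENNReal.ofReal_pow (norm_nonneg h), ofReal_norm_eq_coe_nnnorm]
  set S : Finset w → H → ℝ≥0∞ := fun s h => ∑ i ∈ s, f i h with hS
  have hSm : ∀ s, Measurable (S s) := fun s => Finset.measurable_sum s fun i _ => hfm i
  set V : Finset w → ℝ≥0∞ := fun s => ∑ i ∈ s, (v i : ℝ≥0∞) with hV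
  have hVtop : ∀ s, V s ≠ ⊤ := fun s => by
    rw [hV]
    exact (ENNReal.sum_lt_top.mpr fun i _ => ENNReal.coe_lt_top).ne
  -- Minkowski bound
  have hP2 : ∀ (s : Finset w) (n : ℕ), 1 ≤ n →
      ∫⁻ h, (S s h) ^ n ∂μ ≤ 2 * (Nat.factorial n) * 4 ^ n * (V s) ^ n := by
    intro s n hn
    have hnR : (0:ℝ) < n := by exact_mod_cast hn
    have hcan : ∀ x : ℝ≥0∞, (x ^ ((1:ℝ)/(n:ℝ))) ^ ((n:ℝ)) = x := fun x => by
      rw [← ENNReal.rpow_mul, one_div_mul_cancel hnR.ne', ENNReal.rpow_one]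
    have h1 : (∫⁻ h, (S s h) ^ ((n:ℕ):ℝ) ∂μ) ^ (1/(n:ℝ))
        ≤ ∑ i ∈ s, (∫⁻ h, (f i h) ^ ((n:ℕ):ℝ) ∂μ) ^ (1/(n:ℝ)) :=
      lintegral_sum_pow_le μ f hfm s hn
    have h2 : ∀ i : w, (∫⁻ h, (f i h) ^ ((n:ℕ):ℝ) ∂μ) ^ (1/(n:ℝ))
        ≤ (2 * (Nat.factorial n) * 4 ^ n : ℝ≥0∞) ^ (1/(n:ℝ)) * (v i : ℝ≥0∞) := by
      intro i
      have he : ∫⁻ h, (f i h) ^ ((n:ℕ):ℝ) ∂μ = (v i : ℝ≥0∞) ^ n * gmom n := by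
        rw [← hmom i n]
        refine lintegral_congr fun h => ?_
        rw [ENNReal.rpow_natCast]
      rw [he]
      calc ((v i : ℝ≥0∞) ^ n * gmom n) ^ (1/(n:ℝ))
          ≤ ((v i : ℝ≥0∞) ^ n * (2 * (Nat.factorial n) * 4 ^ n)) ^ (1/(n:ℝ)) := by
            gcongr
            exact gmom_le n
        _ = (2 * (Nat.factorial n) * 4 ^ n : ℝ≥0∞) ^ (1/(n:ℝ)) * (v i : ℝ≥0∞) := by
            rw [ENNReal.mul_rpow_of_nonneg _ _ (by positivity), mul_comm]
            congr 1
            rw [← ENNReal.rpow_natCast ((v i : ℝ≥0∞)) n, ← ENNReal.rpow_mul,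
              mul_one_div, div_self hnR.ne', ENNReal.rpow_one]
    have h3 : (∫⁻ h, (S s h) ^ ((n:ℕ):ℝ) ∂μ) ^ (1/(n:ℝ))
        ≤ (2 * (Nat.factorial n) * 4 ^ n : ℝ≥0∞) ^ (1/(n:ℝ)) * V s := by
      refine h1.trans ?_
      rw [hV, Finset.mul_sum]
      exact Finset.sum_le_sum fun i _ => h2 i
    have h4 := ENNReal.rpow_le_rpow h3 hnR.le
    rw [hcan, ENNReal.mul_rpow_of_nonneg _ _ hnR.le, hcan, ENNReal.rpow_natCast] at h4
    calc ∫⁻ h, (S s h) ^ n ∂μ = ∫⁻ h, (S s h) ^ ((n:ℕ):ℝ) ∂μ := by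
          refine lintegral_congr fun h => ?_
          rw [ENNReal.rpow_natCast]
      _ ≤ _ := h4
  -- exact first moment identity
  have hT : ∀ s : Finset w, ∫⁻ h, S s h ∂μ = V s * gmom 1 := by
    intro s
    rw [hS]
    simp only
    rw [lintegral_finset_sum s (fun i _ => hfm i), hV, Finset.sum_mul]
    refine Finset.sum_congr rfl fun i _ => ?_
    have := hmom i 1
    simpa using this
  have hKV : ∀ s : Finset w, V s = Kc * ∫⁻ h, S s h ∂μ := by
    intro s
    rw [hT s, Kc, mul_comm (V s) (gmom 1), ← mul_assoc,
      ENNReal.inv_mul_cancel gmom_one_pos.ne' gmom_one_ne_top, one_mul]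
  have hSle : ∀ (s : Finset w) (h : H), S s h ≤ (‖h‖₊ : ℝ≥0∞) ^ 2 := fun s h => by
    rw [← hpar h]; exact ENNReal.sum_le_tsum s
  set M' := ∫⁻ h, (‖h‖₊ : ℝ≥0∞) ∂μ with hM'
  -- self-improvement
  have hTbound : ∀ s : Finset w, ∫⁻ h, S s h ∂μ ≤ 64 * Kc^2 * M' ^ 2 := by
    intro s
    set T := ∫⁻ h, S s h ∂μ with hTdef
    by_cases hT0 : T = 0
    · rw [hT0]; exact zero_le
    have hTne : T ≠ ⊤ := by
      rw [hTdef, hT s]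
      exact ENNReal.mul_ne_top (hVtop s) gmom_one_ne_top
    by_cases hMtop : M' = ⊤
    · rw [hMtop]
      have : (64:ℝ≥0∞) * Kc^2 * ⊤ ^ 2 = ⊤ := by
        rw [ENNReal.top_pow (by norm_num), ENNReal.mul_top]
        simp [Kc_ne_zero]
      rw [this]; exact le_top
    -- Hölder
    have hconj : Real.HolderConjugate (3/2) 3 := ⟨by norm_num, by norm_num, by norm_num⟩
    have hH := ENNReal.lintegral_mul_le_Lp_mul_Lq μ hconj
      ((ENNReal.continuous_rpow_const.measurable.comp (hSm s)).aemeasurable)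
      ((ENNReal.continuous_rpow_const.measurable.comp (hSm s)).aemeasurable)
      (f := fun h => (S s h) ^ ((1:ℝ)/3)) (g := fun h => (S s h) ^ ((2:ℝ)/3))
    have e1 : ∀ h : H, (S s h) ^ ((1:ℝ)/3) * (S s h) ^ ((2:ℝ)/3) = S s h := fun h => by
      rw [← ENNReal.rpow_add_of_nonneg _ _ (by norm_num) (by norm_num)]
      norm_num
    have e2 : ∀ h : H, ((S s h) ^ ((1:ℝ)/3)) ^ ((3:ℝ)/2) = (S s h) ^ ((1:ℝ)/2) := fun h => by
      rw [← ENNReal.rpow_mul]; norm_num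
    have e3 : ∀ h : H, ((S s h) ^ ((2:ℝ)/3)) ^ ((3:ℝ)) = (S s h) ^ (2:ℕ) := fun h => by
      rw [← ENNReal.rpow_mul, ← ENNReal.rpow_natCast (S s h) 2]
      norm_num
    simp only [e1, e2, e3] at hH
    have hhalf : ∫⁻ h, (S s h) ^ ((1:ℝ)/2) ∂μ ≤ M' := by
      rw [hM']
      refine lintegral_mono fun h => ?_
      calc (S s h) ^ ((1:ℝ)/2) ≤ ((‖h‖₊ : ℝ≥0∞) ^ (2:ℕ)) ^ ((1:ℝ)/2) :=
            ENNReal.rpow_le_rpow (hSle s h) (by norm_num)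
        _ = (‖h‖₊ : ℝ≥0∞) := by
            rw [← ENNReal.rpow_natCast _ 2, ← ENNReal.rpow_mul]
            norm_num
    have hsq : ∫⁻ h, (S s h) ^ (2:ℕ) ∂μ ≤ 64 * Kc^2 * T^2 := by
      calc ∫⁻ h, (S s h) ^ (2:ℕ) ∂μ ≤ 2 * (Nat.factorial 2) * 4 ^ 2 * (V s) ^ 2 :=
            hP2 s 2 (by norm_num)
        _ = 64 * (V s) ^ 2 := by norm_num
        _ = 64 * Kc^2 * T^2 := by rw [hKV s, ← hTdef, mul_pow]; ring
    have hmain : T ≤ M' ^ ((2:ℝ)/3) * (64 * Kc^2 * T^2) ^ ((1:ℝ)/3) := by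
      calc T = ∫⁻ h, (S s h) ^ ((1:ℝ)/3) * (S s h) ^ ((2:ℝ)/3) ∂μ := by
            rw [hTdef]; exact lintegral_congr fun h => (e1 h).symm
        _ ≤ (∫⁻ h, (S s h) ^ ((1:ℝ)/2) ∂μ) ^ ((2:ℝ)/3)
            * (∫⁻ h, (S s h) ^ (2:ℕ) ∂μ) ^ ((1:ℝ)/3) := by
            convert hH using 2 <;> norm_num
        _ ≤ M' ^ ((2:ℝ)/3) * (64 * Kc^2 * T^2) ^ ((1:ℝ)/3) := by
            gcongr
    set A : ℝ≥0∞ := 64 * Kc^2 with hA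
    have hA0 : A ≠ 0 := by simp [hA, Kc_ne_zero]
    have hAtop : A ≠ ⊤ := by
      rw [hA]
      exact ENNReal.mul_ne_top (by norm_num) (ENNReal.pow_ne_top Kc_ne_top)
    have hstep : T ^ ((1:ℝ)/3) * T ^ ((2:ℝ)/3) ≤ (M' ^ ((2:ℝ)/3) * A ^ ((1:ℝ)/3)) * T ^ ((2:ℝ)/3) := by
      calc T ^ ((1:ℝ)/3) * T ^ ((2:ℝ)/3) = T := by
            rw [← ENNReal.rpow_add_of_nonneg _ _ (by norm_num) (by norm_num)]; norm_num
        _ ≤ M' ^ ((2:ℝ)/3) * (A * T^2) ^ ((1:ℝ)/3) := hmain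
        _ = (M' ^ ((2:ℝ)/3) * A ^ ((1:ℝ)/3)) * T ^ ((2:ℝ)/3) := by
            rw [ENNReal.mul_rpow_of_nonneg _ _ (by norm_num : (0:ℝ) ≤ 1/3)]
            rw [← ENNReal.rpow_natCast T 2, ← ENNReal.rpow_mul]
            norm_num
            ring
    have hcancel : T ^ ((1:ℝ)/3) ≤ M' ^ ((2:ℝ)/3) * A ^ ((1:ℝ)/3) := by
      have h23 : T ^ ((2:ℝ)/3) ≠ 0 := by
        simp only [ne_eq, ENNReal.rpow_eq_zero_iff, not_or]
        constructor
        · rintro ⟨h, -⟩; exact hT0 h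
        · rintro ⟨h, -⟩; exact hTne h
      have h23t : T ^ ((2:ℝ)/3) ≠ ⊤ := by
        refine ENNReal.rpow_ne_top_of_nonneg (by norm_num) hTne
      exact (ENNReal.mul_le_mul_iff_left h23 h23t).mp hstep
    have hfin := ENNReal.rpow_le_rpow hcancel (by norm_num : (0:ℝ) ≤ 3)
    rw [← ENNReal.rpow_mul, ENNReal.mul_rpow_of_nonneg _ _ (by norm_num : (0:ℝ) ≤ 3),
      ← ENNReal.rpow_mul, ← ENNReal.rpow_mul] at hfin
    norm_num at hfin
    calc T = T ^ ((1:ℝ)) := (ENNReal.rpow_one T).symm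
      _ ≤ M' ^ (2:ℕ) * A := by
          rw [← ENNReal.rpow_natCast M' 2]
          convert hfin using 2 <;> norm_num
      _ = A * M' ^ 2 := mul_comm _ _
  -- monotone convergence
  have hMCT : ∀ n : ℕ, ∫⁻ h, (‖h‖₊ : ℝ≥0∞) ^ (2*n) ∂μ
      = ⨆ s : Finset w, ∫⁻ h, (S s h) ^ n ∂μ := by
    intro n
    have hdirS : Directed (· ≤ ·) (fun s : Finset w => S s) := by
      intro s t
      refine ⟨s ∪ t, fun h => ?_, fun h => ?_⟩ <;>
        exact Finset.sum_le_sum_of_subset (by simp [Finset.subset_union_left, Finset.subset_union_right])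
    have hdir : Directed (· ≤ ·) (fun s : Finset w => fun h => (S s h) ^ n) := by
      intro s t
      obtain ⟨u, hsu, htu⟩ := hdirS s t
      exact ⟨u, fun h => pow_le_pow_left' (hsu h) n, fun h => pow_le_pow_left' (htu h) n⟩
    have hpt : ∀ h : H, (‖h‖₊ : ℝ≥0∞) ^ (2*n) = ⨆ s : Finset w, (S s h) ^ n := by
      intro h
      have hd : Directed (· ≤ ·) (fun s : Finset w => S s h) := fun s t => by
        obtain ⟨u, hsu, htu⟩ := hdirS s t
        exact ⟨u, hsu h, htu h⟩
      rw [pow_mul, ← hpar h, ENNReal.tsum_eq_iSup_sum,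
        iSup_pow_directed _ hd n]
    calc ∫⁻ h, (‖h‖₊ : ℝ≥0∞) ^ (2*n) ∂μ
        = ∫⁻ h, ⨆ s : Finset w, (S s h) ^ n ∂μ := lintegral_congr hpt
      _ = ⨆ s : Finset w, ∫⁻ h, (S s h) ^ n ∂μ :=
          lintegral_iSup_directed (fun s => ((hSm s).pow_const n).aemeasurable) hdir
  constructor
  · intro n hn
    rw [hMCT n]
    refine iSup_le fun s => ?_
    calc ∫⁻ h, (S s h) ^ n ∂μ ≤ 2 * (Nat.factorial n) * 4 ^ n * (V s) ^ n := hP2 s n hn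
      _ ≤ 2 * (Nat.factorial n) * 4 ^ n * (Kc * (64 * Kc^2 * M'^2)) ^ n :=
          mul_le_mul_right (pow_le_pow_left'
            (by rw [hKV s]; exact mul_le_mul_right (hTbound s) _) n) _
      _ = 2 * (Nat.factorial n) * (256 * Kc^3) ^ n * M' ^ (2*n) := by
          rw [mul_assoc (2 * (Nat.factorial n : ℝ≥0∞)) (4 ^ n), ← mul_pow]
          ring
  · intro n hn
    rw [hMCT n]
    refine iSup_le fun s => ?_
    have hTle : ∫⁻ h, S s h ∂μ ≤ ∫⁻ h, (‖h‖₊ : ℝ≥0∞)^2 ∂μ :=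
      lintegral_mono fun h => hSle s h
    calc ∫⁻ h, (S s h) ^ n ∂μ ≤ 2 * (Nat.factorial n) * 4 ^ n * (V s) ^ n := hP2 s n hn
      _ ≤ 2 * (Nat.factorial n) * 4 ^ n * (Kc * ∫⁻ h, (‖h‖₊ : ℝ≥0∞)^2 ∂μ) ^ n :=
          mul_le_mul_right (pow_le_pow_left'
            (by rw [hKV s]; exact mul_le_mul_right hTle _) n) _
      _ = 2 * (Nat.factorial n) * (4 * Kc) ^ n * (∫⁻ h, (‖h‖₊ : ℝ≥0∞)^2 ∂μ) ^ n := by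
          ring

lemma ofReal_norm_pow_eq {H : Type*} [NormedAddCommGroup H] (h : H) (k : ℕ) :
    ENNReal.ofReal (‖h‖ ^ k) = (‖h‖₊ : ℝ≥0∞) ^ k := by
  rw [ENNReal.ofReal_pow (norm_nonneg h), ofReal_norm_eq_coe_nnnorm]




/-- All moments of a centred Gaussian measure on a separable Hilbert space are
controlled by the first moment M = ∫‖h‖ dμ: there are universal constants
C, α > 0 with ∫‖h‖^{2n} dμ ≤ n! C α^{-n} M^{2n} for all n ≥ 1; in particular for
every p > 1 there is C_p with (∫‖h‖^p dμ)^{1/p} ≤ C_p (∫‖h‖² dμ)^{1/2}. -/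
theorem gaussian_moments_controlled
    {H : Type*} [NormedAddCommGroup H] [InnerProductSpace ℝ H]
    [CompleteSpace H] [TopologicalSpace.SeparableSpace H]
    [MeasurableSpace H] [BorelSpace H] :
    (∃ C : ℝ, 0 < C ∧ ∃ α : ℝ, 0 < α ∧
      ∀ (μ : Measure H), IsProbabilityMeasure μ →
        (∀ φ : H →L[ℝ] ℝ, ∃ v : NNReal, Measure.map φ μ = gaussianReal 0 v) →
        ∀ n : ℕ, 1 ≤ n →
          ∫ h, ‖h‖ ^ (2 * n) ∂μ
            ≤ (Nat.factorial n : ℝ) * C * α ^ (-(n : ℤ)) * (∫ h, ‖h‖ ∂μ) ^ (2 * n)) ∧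
    ∀ p : ℝ, 1 < p → ∃ Cp : ℝ, 0 < Cp ∧
      ∀ (μ : Measure H), IsProbabilityMeasure μ →
        (∀ φ : H →L[ℝ] ℝ, ∃ v : NNReal, Measure.map φ μ = gaussianReal 0 v) →
          (∫ h, ‖h‖ ^ p ∂μ) ^ (1 / p)
            ≤ Cp * (∫ h, ‖h‖ ^ 2 ∂μ) ^ ((1 : ℝ) / 2) := by
  have hKc3 : (256 : ℝ≥0∞) * Kc ^ 3 ≠ 0 := by
    simp [Kc_ne_zero]
  have hKc3t : (256 : ℝ≥0∞) * Kc ^ 3 ≠ ⊤ :=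
    ENNReal.mul_ne_top (by norm_num) (ENNReal.pow_ne_top Kc_ne_top)
  set βR : ℝ := ((256 : ℝ≥0∞) * Kc ^ 3).toReal with hβR
  have hβRpos : 0 < βR := ENNReal.toReal_pos hKc3 hKc3t
  constructor
  · refine ⟨2, by norm_num, βR⁻¹, by positivity, ?_⟩
    intro μ hμprob hG n hn
    haveI := hμprob
    have hβ : (βR⁻¹ : ℝ) ^ (-(n:ℤ)) = βR ^ n := by
      rw [zpow_neg, inv_zpow, inv_inv, zpow_natCast]
    have key := (gaussian_lintegral_moment_bounds μ hG).1 n hn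
    set M' := ∫⁻ h, (‖h‖₊ : ℝ≥0∞) ∂μ with hM'
    by_cases hM : M' = ⊤
    · -- non-integrable case: both sides vanish
      have hnnorm : ¬ Integrable (fun h : H => ‖h‖) μ := by
        intro hint
        have h1 := (hasFiniteIntegral_iff_ofReal
          (Filter.Eventually.of_forall fun h => norm_nonneg h)).mp hint.hasFiniteIntegral
        rw [lintegral_congr (fun h : H => ofReal_norm_eq_coe_nnnorm h)] at h1
        rw [← hM', hM] at h1
        exact lt_irrefl _ h1
      have hL2n : ∫⁻ h, (‖h‖₊ : ℝ≥0∞) ^ (2*n) ∂μ = ⊤ := by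
        by_contra hne
        have hpt : ∀ h : H, (‖h‖₊ : ℝ≥0∞) ≤ 1 + (‖h‖₊ : ℝ≥0∞) ^ (2*n) := by
          intro h
          rcases le_total ((‖h‖₊ : ℝ≥0∞)) 1 with hle | hle
          · exact hle.trans le_self_add
          · exact (le_self_pow₀ hle (by omega)).trans le_add_self
        have h2 : M' ≤ 1 + ∫⁻ h, (‖h‖₊ : ℝ≥0∞) ^ (2*n) ∂μ := by
          rw [hM']
          calc ∫⁻ h, (‖h‖₊ : ℝ≥0∞) ∂μ ≤ ∫⁻ h, (1 + (‖h‖₊ : ℝ≥0∞) ^ (2*n)) ∂μ :=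
                lintegral_mono hpt
            _ = 1 + ∫⁻ h, (‖h‖₊ : ℝ≥0∞) ^ (2*n) ∂μ := by
                rw [lintegral_add_left measurable_const, lintegral_const, measure_univ, mul_one]
        rw [hM] at h2
        have h3 : (1 : ℝ≥0∞) + ∫⁻ h, (‖h‖₊ : ℝ≥0∞) ^ (2*n) ∂μ < ⊤ :=
          ENNReal.add_lt_top.mpr ⟨ENNReal.one_lt_top, lt_top_iff_ne_top.mpr hne⟩
        exact lt_irrefl _ (h2.trans_lt h3)
      have h2nint : ¬ Integrable (fun h : H => ‖h‖ ^ (2*n)) μ := by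
        intro hint
        have h1 := (hasFiniteIntegral_iff_ofReal
          (Filter.Eventually.of_forall fun h : H => by positivity)).mp hint.hasFiniteIntegral
        rw [lintegral_congr (fun h : H => ofReal_norm_pow_eq h (2*n)), hL2n] at h1
        exact lt_irrefl _ h1
      rw [integral_undef hnnorm, integral_undef h2nint, zero_pow (by omega : 2*n ≠ 0)]
      simp
    · have hRne : (2 * (Nat.factorial n : ℝ≥0∞) * ((256:ℝ≥0∞) * Kc^3) ^ n * M' ^ (2*n)) ≠ ⊤ :=
        ENNReal.mul_ne_top (ENNReal.mul_ne_top (ENNReal.mul_ne_top (by norm_num)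
          (ENNReal.natCast_ne_top _)) (ENNReal.pow_ne_top hKc3t)) (ENNReal.pow_ne_top hM)
      have hInorm : ∫ h, ‖h‖ ∂μ = M'.toReal := by
        rw [integral_eq_lintegral_of_nonneg_ae (Filter.Eventually.of_forall fun h => norm_nonneg h)
          continuous_norm.aestronglyMeasurable, hM']
        congr 1
        exact lintegral_congr fun h => ofReal_norm_eq_coe_nnnorm h
      have hI2n : ∫ h, ‖h‖ ^ (2*n) ∂μ = (∫⁻ h, (‖h‖₊ : ℝ≥0∞) ^ (2*n) ∂μ).toReal := by
        rw [integral_eq_lintegral_of_nonneg_ae (f := fun h : H => ‖h‖ ^ (2*n))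
          (Filter.Eventually.of_forall fun h : H => by positivity)
          ((continuous_norm.pow _).aestronglyMeasurable : AEStronglyMeasurable (fun h : H => ‖h‖ ^ (2*n)) μ)]
        congr 1
        exact lintegral_congr fun h => ofReal_norm_pow_eq h (2*n)
      have hmono := ENNReal.toReal_mono hRne key
      rw [hI2n, hInorm, hβ]
      calc (∫⁻ h, (‖h‖₊ : ℝ≥0∞) ^ (2*n) ∂μ).toReal
          ≤ (2 * (Nat.factorial n : ℝ≥0∞) * ((256:ℝ≥0∞)*Kc^3) ^ n * M' ^ (2*n)).toReal := hmono
        _ = (Nat.factorial n : ℝ) * 2 * βR ^ n * M'.toReal ^ (2*n) := by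
            rw [ENNReal.toReal_mul, ENNReal.toReal_mul, ENNReal.toReal_mul,
              ENNReal.toReal_pow, ENNReal.toReal_pow, ENNReal.toReal_ofNat,
              ENNReal.toReal_natCast, ← hβR]
            ring
  · intro p hp
    have hp0 : (0:ℝ) < p := by linarith
    set n : ℕ := ⌈p⌉₊ with hndef
    have hn1 : 1 ≤ n := Nat.one_le_ceil_iff.mpr hp0
    have hpn : p ≤ (n:ℝ) := Nat.le_ceil p
    have hn0R : (0:ℝ) < n := by exact_mod_cast hn1
    set base : ℝ≥0∞ := 2 * (Nat.factorial n) * (4 * Kc) ^ n with hbase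
    have hbase0 : base ≠ 0 := by
      rw [hbase]
      refine mul_ne_zero (mul_ne_zero (by norm_num) ?_) (pow_ne_zero _ ?_)
      · exact_mod_cast (Nat.factorial_pos n).ne'
      · intro h
        rcases mul_eq_zero.mp h with h | h
        · norm_num at h
        · exact Kc_ne_zero h
    have hbaset : base ≠ ⊤ := by
      rw [hbase]
      exact ENNReal.mul_ne_top (ENNReal.mul_ne_top (by norm_num) (ENNReal.natCast_ne_top _))
        (ENNReal.pow_ne_top (ENNReal.mul_ne_top (by norm_num) Kc_ne_top))
    set Dp : ℝ≥0∞ := base ^ (1/(2*(n:ℝ))) with hDp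
    have hDpt : Dp ≠ ⊤ := ENNReal.rpow_ne_top_of_nonneg (by positivity) hbaset
    have hDp0 : Dp ≠ 0 := by
      rw [hDp, ne_eq, ENNReal.rpow_eq_zero_iff]
      simp [hbase0, hbaset]
    refine ⟨Dp.toReal, ENNReal.toReal_pos hDp0 hDpt, ?_⟩
    intro μ hprob hG
    haveI := hprob
    have key := gaussian_lintegral_moment_bounds μ hG
    set L2 : ℝ≥0∞ := ∫⁻ h, (‖h‖₊ : ℝ≥0∞)^2 ∂μ with hL2
    set Lp : ℝ≥0∞ := ∫⁻ h, (‖h‖₊ : ℝ≥0∞) ^ (p:ℝ) ∂μ with hLp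
    by_cases hint : Integrable (fun h : H => ‖h‖ ^ p) μ
    swap
    · rw [integral_undef hint, Real.zero_rpow (one_div_ne_zero hp0.ne')]
      exact mul_nonneg ENNReal.toReal_nonneg
        (Real.rpow_nonneg (integral_nonneg fun h => by positivity) _)
    · have hmeasF : AEStronglyMeasurable (fun h : H => ‖h‖) μ :=
        continuous_norm.aestronglyMeasurable
      have hLpne : Lp ≠ ⊤ := by
        have h1 := (hasFiniteIntegral_iff_ofReal
          (Filter.Eventually.of_forall fun h : H => Real.rpow_nonneg (norm_nonneg h) p)).mp
          hint.hasFiniteIntegral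
        rw [lintegral_congr (fun h : H => by
          rw [← ENNReal.ofReal_rpow_of_nonneg (norm_nonneg h) hp0.le, ofReal_norm_eq_coe_nnnorm])]
          at h1
        exact h1.ne
      have hsnp : eLpNorm (fun h : H => ‖h‖) (ENNReal.ofReal p) μ = Lp ^ (1/p) := by
        rw [eLpNorm_eq_lintegral_rpow_enorm_toReal
          ((ENNReal.ofReal_pos.mpr hp0).ne') ENNReal.ofReal_ne_top,
          ENNReal.toReal_ofReal hp0.le, hLp]
        congr 1
        refine lintegral_congr fun h => ?_
        rw [enorm_norm, enorm_eq_nnnorm]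
      have hM'ne : (∫⁻ h, (‖h‖₊ : ℝ≥0∞) ∂μ) ≠ ⊤ := by
        have hmono := eLpNorm_le_eLpNorm_of_exponent_le
          (show (1:ℝ≥0∞) ≤ ENNReal.ofReal p by
            rw [← ENNReal.ofReal_one]; exact ENNReal.ofReal_le_ofReal hp.le) hmeasF
        rw [eLpNorm_one_eq_lintegral_enorm] at hmono
        simp only [enorm_norm, enorm_eq_nnnorm, nnnorm_norm] at hmono
        refine (hmono.trans_lt ?_).ne
        rw [hsnp]
        exact ENNReal.rpow_lt_top_of_nonneg (by positivity) hLpne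
      have hL2ne : L2 ≠ ⊤ := by
        have h1 := key.1 1 le_rfl
        have hRne : (2 * (Nat.factorial 1 : ℝ≥0∞) * ((256:ℝ≥0∞) * Kc^3) ^ 1
            * (∫⁻ h, (‖h‖₊ : ℝ≥0∞) ∂μ) ^ (2*1)) ≠ ⊤ :=
          ENNReal.mul_ne_top (ENNReal.mul_ne_top (ENNReal.mul_ne_top (by norm_num)
            (ENNReal.natCast_ne_top _)) (ENNReal.pow_ne_top hKc3t)) (ENNReal.pow_ne_top hM'ne)
        have he : L2 = ∫⁻ h, (‖h‖₊ : ℝ≥0∞) ^ (2*1) ∂μ := by norm_num [hL2]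
        rw [← he] at h1
        exact (h1.trans_lt hRne.lt_top).ne
      have hL2n := key.2 n hn1
      have hsn2 : eLpNorm (fun h : H => ‖h‖) (ENNReal.ofReal (2*(n:ℝ))) μ
          = (∫⁻ h, (‖h‖₊ : ℝ≥0∞) ^ (2*n) ∂μ) ^ (1/(2*(n:ℝ))) := by
        rw [eLpNorm_eq_lintegral_rpow_enorm_toReal
          ((ENNReal.ofReal_pos.mpr (by positivity)).ne') ENNReal.ofReal_ne_top,
          ENNReal.toReal_ofReal (by positivity)]
        congr 1
        refine lintegral_congr fun h => ?_
        rw [enorm_norm, enorm_eq_nnnorm]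
        rw [show ((2*(n:ℝ))) = ((2*n : ℕ):ℝ) by push_cast; ring, ENNReal.rpow_natCast]
      have hchain : Lp ^ (1/p) ≤ Dp * L2 ^ ((1:ℝ)/2) := by
        rw [← hsnp]
        calc eLpNorm (fun h : H => ‖h‖) (ENNReal.ofReal p) μ
            ≤ eLpNorm (fun h : H => ‖h‖) (ENNReal.ofReal (2*(n:ℝ))) μ :=
              eLpNorm_le_eLpNorm_of_exponent_le
                (ENNReal.ofReal_le_ofReal (by linarith)) hmeasF
          _ = (∫⁻ h, (‖h‖₊ : ℝ≥0∞) ^ (2*n) ∂μ) ^ (1/(2*(n:ℝ))) := hsn2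
          _ ≤ (base * L2 ^ n) ^ (1/(2*(n:ℝ))) := by
              gcongr
          _ = Dp * L2 ^ ((1:ℝ)/2) := by
              rw [ENNReal.mul_rpow_of_nonneg _ _ (by positivity), hDp]
              congr 1
              rw [← ENNReal.rpow_natCast L2 n, ← ENNReal.rpow_mul,
                show (n:ℝ) * (1/(2*(n:ℝ))) = 1/2 by
                  rw [mul_one_div, div_eq_div_iff (by linarith : (0:ℝ) < 2*(n:ℝ)).ne'
                    (by norm_num : (2:ℝ) ≠ 0)]
                  ring]
      have hIp : ∫ h, ‖h‖ ^ p ∂μ = Lp.toReal := by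
        rw [integral_eq_lintegral_of_nonneg_ae
          (Filter.Eventually.of_forall fun h : H => Real.rpow_nonneg (norm_nonneg h) p)
          ((continuous_norm.rpow_const fun h => Or.inr hp0.le).aestronglyMeasurable), hLp]
        congr 1
        refine lintegral_congr fun h => ?_
        rw [← ENNReal.ofReal_rpow_of_nonneg (norm_nonneg h) hp0.le, ofReal_norm_eq_coe_nnnorm]
      have hI2 : ∫ h, ‖h‖ ^ 2 ∂μ = L2.toReal := by
        rw [integral_eq_lintegral_of_nonneg_ae (f := fun h : H => ‖h‖ ^ 2)
          (Filter.Eventually.of_forall fun h : H => by positivity)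
          ((continuous_norm.pow 2).aestronglyMeasurable : AEStronglyMeasurable (fun h : H => ‖h‖ ^ 2) μ), hL2]
        congr 1
        exact lintegral_congr fun h => ofReal_norm_pow_eq h 2
      rw [hIp, hI2]
      have hRHSne : Dp * L2 ^ ((1:ℝ)/2) ≠ ⊤ :=
        ENNReal.mul_ne_top hDpt (ENNReal.rpow_ne_top_of_nonneg (by norm_num) hL2ne)
      have hfinal := ENNReal.toReal_mono hRHSne hchain
      rw [ENNReal.toReal_mul, ← ENNReal.toReal_rpow Lp (1/p),
        ← ENNReal.toReal_rpow L2 ((1:ℝ)/2)] at hfinal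
      exact hfinal
end
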